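/- Let μ be a probability measure on ℝ concentrated on [0,∞) with ∫ x dμ(x) = 1 and ∫ x² dμ(x) < ∞, such that μ equals the pushforward of (uniform on [0,1]) ⊗ (uniform on [0,1]) ⊗ μ ⊗ μ under the map (u, v, x, y) ↦ u^{β/2}·v^β·x + u^{β/2}·(1−v)^β·y. Then its second moment is given explicitly by ∫ x² dμ(x) = 2·B(β+1, β+1)·(2β+1)/(3(1−β)). -/

import Mathlib

open MeasureTheory Real Set

/-- The exponent `β = (√17 - 3)/2`, the positive root of `(β+1)(β+2) = 4`. -/
noncomputable def β : ℝ := (Real.sqrt 17 - 3) / 2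

/-- The Beta function `B(a,b) = ∫₀¹ t^{a-1}(1-t)^{b-1} dt`. -/
noncomputable def Bfun (a b : ℝ) : ℝ := ∫ t in (0:ℝ)..1, t ^ (a - 1) * (1 - t) ^ (b - 1)

/-- The uniform distribution on `[0,1]`. -/
noncomputable def unif : MeasureTheory.Measure ℝ :=
  MeasureTheory.volume.restrict (Set.Icc (0 : ℝ) 1)

lemma sqrt17_sq : Real.sqrt 17 ^ 2 = 17 := Real.sq_sqrt (by norm_num)

lemma beta_pos : 0 < β := by
  have h := sqrt17_sq
  have h2 := Real.sqrt_nonneg 17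
  unfold β
  nlinarith

lemma beta_lt_one : β < 1 := by
  have h := sqrt17_sq
  have h2 := Real.sqrt_nonneg 17
  unfold β
  nlinarith

lemma beta_quad : β ^ 2 + 3 * β = 2 := by
  have h := sqrt17_sq
  unfold β
  nlinarith

instance : IsProbabilityMeasure unif := by
  constructor
  rw [unif, Measure.restrict_apply_univ, Real.volume_Icc]
  norm_num

lemma unif_compl : unif (Set.Icc (0:ℝ) 1)ᶜ = 0 := by
  rw [unif, Measure.restrict_apply measurableSet_Icc.compl, compl_inter_self]
  simp

lemma unif_rpow {c : ℝ} (hc : 0 < c) : (∫ x, x ^ c ∂unif) = 1 / (c + 1) := by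
  have h : (∫ x, x ^ c ∂unif) = ∫ x in (0:ℝ)..1, x ^ c := by
    rw [intervalIntegral.integral_of_le zero_le_one, unif,
      ← MeasureTheory.integral_Icc_eq_integral_Ioc]
  rw [h, integral_rpow (Or.inl (by linarith))]
  rw [Real.one_rpow, Real.zero_rpow (by linarith : c + 1 ≠ 0)]
  ring

lemma unif_one_sub_rpow {c : ℝ} (hc : 0 < c) : (∫ x, (1 - x) ^ c ∂unif) = 1 / (c + 1) := by
  have h : (∫ x, (1 - x) ^ c ∂unif) = ∫ x in (0:ℝ)..1, (1 - x) ^ c := by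
    rw [intervalIntegral.integral_of_le zero_le_one, unif,
      ← MeasureTheory.integral_Icc_eq_integral_Ioc]
  rw [h, intervalIntegral.integral_comp_sub_left (fun t => t ^ c) 1]
  norm_num
  rw [integral_rpow (Or.inl (by linarith))]
  rw [Real.one_rpow, Real.zero_rpow (by linarith : c + 1 ≠ 0)]
  ring

lemma unif_beta_int : (∫ x, x ^ β * (1 - x) ^ β ∂unif) = Bfun (β + 1) (β + 1) := by
  have h : (∫ x, x ^ β * (1 - x) ^ β ∂unif) = ∫ x in (0:ℝ)..1, x ^ β * (1 - x) ^ β := by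
    rw [intervalIntegral.integral_of_le zero_le_one, unif,
      ← MeasureTheory.integral_Icc_eq_integral_Ioc]
  rw [h, Bfun]
  norm_num

lemma cont_rpow {c : ℝ} (hc : 0 ≤ c) : Continuous fun x : ℝ => x ^ c :=
  Real.continuous_rpow_const hc

lemma integrable_unif_of_continuous {f : ℝ → ℝ} (hf : Continuous f) : Integrable f unif := by
  rw [unif]
  exact hf.integrableOn_Icc

lemma int4 {μ₁ μ₂ μ₃ μ₄ : Measure ℝ} [SFinite μ₁] [SFinite μ₂] [SFinite μ₃] [SFinite μ₄]
    (f g h k : ℝ → ℝ) :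
    (∫ p : ℝ × ℝ × ℝ × ℝ, f p.1 * (g p.2.1 * (h p.2.2.1 * k p.2.2.2))
        ∂(μ₁.prod (μ₂.prod (μ₃.prod μ₄)))) =
      (∫ x, f x ∂μ₁) * ((∫ x, g x ∂μ₂) * ((∫ x, h x ∂μ₃) * (∫ x, k x ∂μ₄))) := by
  rw [show (∫ x, h x ∂μ₃) * (∫ x, k x ∂μ₄) = ∫ q : ℝ × ℝ, h q.1 * k q.2 ∂(μ₃.prod μ₄) from
    (integral_prod_mul h k).symm]
  rw [show (∫ x, g x ∂μ₂) * (∫ q : ℝ × ℝ, h q.1 * k q.2 ∂(μ₃.prod μ₄)) =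
      ∫ q : ℝ × ℝ × ℝ, g q.1 * (h q.2.1 * k q.2.2) ∂(μ₂.prod (μ₃.prod μ₄)) from
    (integral_prod_mul g (fun q : ℝ × ℝ => h q.1 * k q.2)).symm]
  exact integral_prod_mul f (fun q : ℝ × ℝ × ℝ => g q.1 * (h q.2.1 * k q.2.2))

lemma integ4 {μ₁ μ₂ μ₃ μ₄ : Measure ℝ} [SFinite μ₁] [SFinite μ₂] [SFinite μ₃] [SFinite μ₄]
    {f g h k : ℝ → ℝ} (hf : Integrable f μ₁) (hg : Integrable g μ₂)
    (hh : Integrable h μ₃) (hk : Integrable k μ₄) :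
    Integrable (fun p : ℝ × ℝ × ℝ × ℝ => f p.1 * (g p.2.1 * (h p.2.2.1 * k p.2.2.2)))
      (μ₁.prod (μ₂.prod (μ₃.prod μ₄))) :=
  hf.mul_prod (hg.mul_prod (hh.mul_prod hk))

/-- Any solution `μ` of the fixed-point equation
`Ψ =d U^{β/2} V^β Ψ + U^{β/2} (1-V)^β Ψ'` that is concentrated on `[0,∞)` with unit
mean and finite second moment has second moment `2 B(β+1,β+1)(2β+1)/(3(1-β))`. -/
theorem psi_second_moment (μ : MeasureTheory.Measure ℝ)
    (hprob : MeasureTheory.IsProbabilityMeasure μ)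
    (hpos : μ {x : ℝ | x < 0} = 0)
    (hint1 : MeasureTheory.Integrable (fun x : ℝ => x) μ)
    (hmean : (∫ x, x ∂μ) = 1)
    (hint2 : MeasureTheory.Integrable (fun x : ℝ => x ^ 2) μ)
    (hfix : μ = MeasureTheory.Measure.map
            (fun p : ℝ × ℝ × ℝ × ℝ =>
              p.1 ^ (β / 2) * p.2.1 ^ β * p.2.2.1 +
                p.1 ^ (β / 2) * (1 - p.2.1) ^ β * p.2.2.2)
            (unif.prod (unif.prod (μ.prod μ)))) :
    (∫ x, x ^ 2 ∂μ) = 2 * Bfun (β + 1) (β + 1) * (2 * β + 1) / (3 * (1 - β)) := by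
  have hb0 := beta_pos
  have hb1 := beta_lt_one
  set mP : Measure (ℝ × ℝ × ℝ × ℝ) := unif.prod (unif.prod (μ.prod μ)) with hmP
  set T : ℝ × ℝ × ℝ × ℝ → ℝ := fun p =>
    p.1 ^ (β / 2) * p.2.1 ^ β * p.2.2.1 + p.1 ^ (β / 2) * (1 - p.2.1) ^ β * p.2.2.2 with hT
  have hTm : Measurable T := by
    apply Measurable.add
    · exact ((measurable_fst.pow_const _).mul
        ((measurable_fst.comp measurable_snd).pow_const _)).mul
        (measurable_fst.comp (measurable_snd.comp measurable_snd))
    · exact ((measurable_fst.pow_const _).mul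
        ((measurable_const.sub (measurable_fst.comp measurable_snd)).pow_const _)).mul
        (measurable_snd.comp (measurable_snd.comp measurable_snd))
  have key : (∫ x, x ^ 2 ∂μ) = ∫ p, (T p) ^ 2 ∂mP := by
    nth_rewrite 1 [hfix]
    exact integral_map hTm.aemeasurable ((measurable_id.pow_const 2).aestronglyMeasurable)
  -- a.e. facts
  have h1 : ∀ᵐ p : ℝ × ℝ × ℝ × ℝ ∂mP, p.1 ∈ Set.Icc (0:ℝ) 1 := by
    rw [ae_iff]
    have hs : {p : ℝ × ℝ × ℝ × ℝ | ¬ p.1 ∈ Set.Icc (0:ℝ) 1} =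
        (Set.Icc (0:ℝ) 1)ᶜ ×ˢ (Set.univ : Set (ℝ × ℝ × ℝ)) := by
      ext p; simp
    rw [hs, hmP, Measure.prod_prod, unif_compl, zero_mul]
  have h2 : ∀ᵐ p : ℝ × ℝ × ℝ × ℝ ∂mP, p.2.1 ∈ Set.Icc (0:ℝ) 1 := by
    rw [ae_iff]
    have hs : {p : ℝ × ℝ × ℝ × ℝ | ¬ p.2.1 ∈ Set.Icc (0:ℝ) 1} =
        (Set.univ : Set ℝ) ×ˢ ((Set.Icc (0:ℝ) 1)ᶜ ×ˢ (Set.univ : Set (ℝ × ℝ))) := by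
      ext p; simp
    rw [hs, hmP, Measure.prod_prod, Measure.prod_prod, unif_compl, zero_mul, mul_zero]
  have hae : ∀ᵐ p : ℝ × ℝ × ℝ × ℝ ∂mP, (T p) ^ 2 =
      p.1 ^ β * (p.2.1 ^ (2*β) * (p.2.2.1 ^ 2 * (1:ℝ))) +
        (p.1 ^ β * ((1 - p.2.1) ^ (2*β) * ((1:ℝ) * p.2.2.2 ^ 2)) +
          2 * (p.1 ^ β * ((p.2.1 ^ β * (1 - p.2.1) ^ β) * (p.2.2.1 * p.2.2.2)))) := by
    filter_upwards [h1, h2] with p hp1 hp2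
    obtain ⟨hu0, _⟩ := hp1
    obtain ⟨hv0, hv1⟩ := hp2
    have e1 : p.1 ^ (β/2) * p.1 ^ (β/2) = p.1 ^ β := by
      have hb : β/2 + β/2 = β := by ring
      rw [← Real.rpow_add' hu0 (by rw [hb]; exact ne_of_gt hb0), hb]
    have e2 : p.2.1 ^ β * p.2.1 ^ β = p.2.1 ^ (2*β) := by
      have hb : β + β = 2*β := by ring
      rw [← Real.rpow_add' hv0 (by rw [hb]; positivity), hb]
    have e3 : (1 - p.2.1) ^ β * (1 - p.2.1) ^ β = (1 - p.2.1) ^ (2*β) := by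
      have hb : β + β = 2*β := by ring
      rw [← Real.rpow_add' (by linarith : (0:ℝ) ≤ 1 - p.2.1) (by rw [hb]; positivity), hb]
    rw [← e1, ← e2, ← e3]
    simp only [hT]
    ring
  rw [integral_congr_ae hae] at key
  -- integrability pieces
  have hfβ : Integrable (fun x : ℝ => x ^ β) unif :=
    integrable_unif_of_continuous (cont_rpow (le_of_lt hb0))
  have hf2β : Integrable (fun x : ℝ => x ^ (2*β)) unif :=
    integrable_unif_of_continuous (cont_rpow (by positivity))
  have hg2β : Integrable (fun x : ℝ => (1 - x) ^ (2*β)) unif :=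
    integrable_unif_of_continuous ((cont_rpow (by positivity)).comp (continuous_const.sub continuous_id))
  have hgββ : Integrable (fun x : ℝ => x ^ β * (1 - x) ^ β) unif :=
    integrable_unif_of_continuous ((cont_rpow (le_of_lt hb0)).mul
      ((cont_rpow (le_of_lt hb0)).comp (continuous_const.sub continuous_id)))
  have hone : Integrable (fun _ : ℝ => (1:ℝ)) μ := integrable_const 1
  have hA : Integrable (fun p : ℝ × ℝ × ℝ × ℝ =>
      p.1 ^ β * (p.2.1 ^ (2*β) * (p.2.2.1 ^ 2 * 1))) mP := by
    exact integ4 hfβ hf2β hint2 hone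
  have hB : Integrable (fun p : ℝ × ℝ × ℝ × ℝ =>
      p.1 ^ β * ((1 - p.2.1) ^ (2*β) * (1 * p.2.2.2 ^ 2))) mP := by
    exact integ4 hfβ hg2β hone hint2
  have hC : Integrable (fun p : ℝ × ℝ × ℝ × ℝ =>
      p.1 ^ β * (p.2.1 ^ β * (1 - p.2.1) ^ β * (p.2.2.1 * p.2.2.2))) mP := by
    exact integ4 hfβ hgββ hint1 hint1
  have iA : (∫ p : ℝ × ℝ × ℝ × ℝ, p.1 ^ β * (p.2.1 ^ (2*β) * (p.2.2.1 ^ 2 * 1)) ∂mP) =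
      (∫ x, x ^ β ∂unif) * ((∫ x, x ^ (2*β) ∂unif) *
        ((∫ x, x ^ 2 ∂μ) * (∫ _, (1:ℝ) ∂μ))) := by
    exact int4 (fun x => x ^ β) (fun x => x ^ (2*β)) (fun x => x ^ 2) (fun _ => (1:ℝ))
  have iB : (∫ p : ℝ × ℝ × ℝ × ℝ, p.1 ^ β * ((1 - p.2.1) ^ (2*β) * (1 * p.2.2.2 ^ 2)) ∂mP) =
      (∫ x, x ^ β ∂unif) * ((∫ x, (1 - x) ^ (2*β) ∂unif) *
        ((∫ _, (1:ℝ) ∂μ) * (∫ x, x ^ 2 ∂μ))) := by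
    exact int4 (fun x => x ^ β) (fun x => (1 - x) ^ (2*β)) (fun _ => (1:ℝ)) (fun x => x ^ 2)
  have iC : (∫ p : ℝ × ℝ × ℝ × ℝ,
        p.1 ^ β * (p.2.1 ^ β * (1 - p.2.1) ^ β * (p.2.2.1 * p.2.2.2)) ∂mP) =
      (∫ x, x ^ β ∂unif) * ((∫ x, x ^ β * (1 - x) ^ β ∂unif) *
        ((∫ x, x ∂μ) * (∫ x, x ∂μ))) := by
    exact int4 (fun x => x ^ β) (fun x => x ^ β * (1 - x) ^ β) (fun x => x) (fun x => x)
  have hC2 : Integrable (fun p : ℝ × ℝ × ℝ × ℝ =>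
      2 * (p.1 ^ β * (p.2.1 ^ β * (1 - p.2.1) ^ β * (p.2.2.1 * p.2.2.2)))) mP := by
    exact hC.const_mul 2
  have hBC : Integrable (fun p : ℝ × ℝ × ℝ × ℝ =>
      p.1 ^ β * ((1 - p.2.1) ^ (2*β) * (1 * p.2.2.2 ^ 2)) +
        2 * (p.1 ^ β * (p.2.1 ^ β * (1 - p.2.1) ^ β * (p.2.2.1 * p.2.2.2)))) mP := by
    exact hB.add hC2
  rw [integral_add hA hBC, integral_add hB hC2, integral_const_mul, iA, iB, iC] at key
  rw [unif_rpow hb0, unif_rpow (by positivity : (0:ℝ) < 2*β),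
    unif_one_sub_rpow (by positivity : (0:ℝ) < 2*β), unif_beta_int, hmean] at key
  simp only [integral_const, probReal_univ, measure_univ, ENNReal.toReal_one, smul_eq_mul, one_mul, mul_one] at key
  -- solve the linear equation
  have hne1 : (β:ℝ) + 1 ≠ 0 := by linarith
  have hne2 : 2*β + 1 ≠ 0 := by linarith
  have hne3 : 3*(1-β) ≠ 0 := by intro h; nlinarith
  set m2 := ∫ x, x ^ 2 ∂μ with hm2
  set B := Bfun (β + 1) (β + 1) with hB2
  have e : m2 * ((β+1)*(2*β+1)) = 2*m2 + 2*B*(2*β+1) := by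
    calc m2 * ((β+1)*(2*β+1))
        = (1 / (β + 1) * (1 / (2 * β + 1) * m2) +
            (1 / (β + 1) * (1 / (2 * β + 1) * m2) + 2 * (1 / (β + 1) * B))) *
          ((β+1)*(2*β+1)) := by rw [← key]
      _ = 2*m2 + 2*B*(2*β+1) := by field_simp; ring
  rw [eq_div_iff hne3]
  linear_combination e - 2 * m2 * beta_quad
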